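/- The solution of the exact optimality equations is the lexicographically greatest solution of the relaxed inequalities: Let S be a finite state set with final set F, each nonfinal state s having a unique successor s' with cost t(s) ≥ 0 (a 0-player system). Suppose (T, D) satisfies T(s)=0, D(s)=0 on F and T(s) = t(s) + T(s'), D(s) = 1 + D(s') on S \ F, and suppose (T≤, D≤) satisfies (T≤(s), D≤(s)) ≤_lex (0,0) on F and (T≤(s), D≤(s)) ≤_lex (t(s) + T≤(s'), 1 + D≤(s')) on S \ F. Then for every s with D(s) < ∞, (T≤(s), D≤(s)) ≤_lex (T(s), D(s)); and if some relaxed inequality is strict at a reachable state, then (T≤(s), D≤(s)) <_lex (T(s), D(s)) at some s. -/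

import Mathlib

def elexLe (p q : EReal × ℕ∞) : Prop := p.1 < q.1 ∨ (p.1 = q.1 ∧ p.2 ≤ q.2)

def elexLt (p q : EReal × ℕ∞) : Prop := p.1 < q.1 ∨ (p.1 = q.1 ∧ p.2 < q.2)

lemma elexLe_trans {p q r} (h1 : elexLe p q) (h2 : elexLe q r) : elexLe p r := by
  rcases h1 with h | ⟨h, h'⟩ <;> rcases h2 with g | ⟨g, g'⟩
  · exact Or.inl (h.trans g)
  · exact Or.inl (g ▸ h)
  · exact Or.inl (h ▸ g)
  · exact Or.inr ⟨h.trans g, h'.trans g'⟩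

lemma elexLt_le_trans {p q r} (h1 : elexLt p q) (h2 : elexLe q r) : elexLt p r := by
  rcases h1 with h | ⟨h, h'⟩ <;> rcases h2 with g | ⟨g, g'⟩
  · exact Or.inl (h.trans g)
  · exact Or.inl (g ▸ h)
  · exact Or.inl (h ▸ g)
  · exact Or.inr ⟨h.trans g, h'.trans_le g'⟩

lemma elexLe_ne_lt {p q} (h : elexLe p q) (hne : p ≠ q) : elexLt p q := by
  rcases h with h | ⟨h, h'⟩
  · exact Or.inl h
  · refine Or.inr ⟨h, lt_of_le_of_ne h' ?_⟩
    intro h2; exact hne (Prod.ext h h2)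

lemma elexLe_add {c : ℝ} {a b : EReal} {m n : ℕ∞} (h : elexLe (a, m) (b, n)) :
    elexLe ((c:EReal) + a, 1 + m) ((c:EReal) + b, 1 + n) := by
  rcases h with h | ⟨h, h'⟩
  · left
    exact EReal.add_lt_add_left_coe h c
  · right
    exact ⟨by simp only at h ⊢; rw [h], add_le_add le_rfl h'⟩

theorem stmt11 {S : Type*} [Fintype S] (F : Set S) (succ : S → S)
    (t : S → ℝ) (ht : ∀ s, 0 ≤ t s)
    (T Tle : S → EReal) (D Dle : S → ℕ∞)
    -- (T, D) satisfies the exact 0-player optimality equations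
    (hTF : ∀ s ∈ F, T s = 0 ∧ D s = 0)
    (hT : ∀ s ∉ F, T s = (t s : EReal) + T (succ s) ∧ D s = 1 + D (succ s))
    -- (T≤, D≤) satisfies the relaxed inequalities
    (hleF : ∀ s ∈ F, elexLe (Tle s, Dle s) (0, 0))
    (hle : ∀ s ∉ F, elexLe (Tle s, Dle s) ((t s : EReal) + Tle (succ s), 1 + Dle (succ s))) :
    (∀ s, D s ≠ ⊤ → elexLe (Tle s, Dle s) (T s, D s)) ∧
    ((∃ s, D s ≠ ⊤ ∧
        ((s ∈ F ∧ (Tle s, Dle s) ≠ ((0 : EReal), (0 : ℕ∞))) ∨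
         (s ∉ F ∧ (Tle s, Dle s) ≠ ((t s : EReal) + Tle (succ s), 1 + Dle (succ s))))) →
      ∃ s, D s ≠ ⊤ ∧ elexLt (Tle s, Dle s) (T s, D s)) := by
  have key : ∀ n : ℕ, ∀ s, D s = (n : ℕ∞) → elexLe (Tle s, Dle s) (T s, D s) := by
    intro n
    induction n with
    | zero =>
      intro s hs
      by_cases hF : s ∈ F
      · obtain ⟨h1, h2⟩ := hTF s hF
        rw [h1, h2]; exact hleF s hF
      · obtain ⟨_, h2⟩ := hT s hF
        rw [h2] at hs
        exact absurd hs (by simp [add_eq_zero])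
    | succ n ih =>
      intro s hs
      by_cases hF : s ∈ F
      · obtain ⟨h1, h2⟩ := hTF s hF
        rw [h1, h2]; exact hleF s hF
      · obtain ⟨h1, h2⟩ := hT s hF
        rw [h2] at hs
        have hsucc : D (succ s) = (n : ℕ∞) := by
          have : (1 : ℕ∞) + D (succ s) = 1 + (n : ℕ∞) := by
            rw [hs]; push_cast; ring
          exact WithTop.add_left_cancel ENat.one_ne_top this
        have := elexLe_add (c := t s) (ih (succ s) hsucc)
        refine elexLe_trans (hle s hF) ?_
        rw [h1, h2]
        exact this
  have part1 : ∀ s, D s ≠ ⊤ → elexLe (Tle s, Dle s) (T s, D s) := by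
    intro s hs
    obtain ⟨n, hn⟩ := Option.ne_none_iff_exists'.mp hs
    exact key n s hn
  refine ⟨part1, ?_⟩
  rintro ⟨s, hs, h⟩
  refine ⟨s, hs, ?_⟩
  rcases h with ⟨hF, hne⟩ | ⟨hF, hne⟩
  · obtain ⟨h1, h2⟩ := hTF s hF
    rw [h1, h2]
    exact elexLe_ne_lt (hleF s hF) hne
  · obtain ⟨h1, h2⟩ := hT s hF
    have hstrict := elexLe_ne_lt (hle s hF) hne
    have hDsucc : D (succ s) ≠ ⊤ := by
      intro h; rw [h2, h] at hs; simp at hs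
    have := elexLe_add (c := t s) (part1 (succ s) hDsucc)
    refine elexLt_le_trans hstrict ?_
    rw [h1, h2]
    exact this
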